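/- Let (F_n) denote the Fibonacci sequence with F_1 = F_2 = 1 and F_{n+1} = F_n + F_{n−1}. For every integer n ≥ 1 and every integer k with 0 ≤ k ≤ n, it holds that 5·F_{n−k+1}·F_{k+1} ≥ F_{n+3}. Equivalently, with φ = (1+√5)/2, for all n ≥ 1, inf_{0≤k≤n} [φ^{n−k+1} − (1−φ)^{n−k+1}]·[φ^{k+1} − (1−φ)^{k+1}] / ([φ^{n+3} − (1−φ)^{n+3}]·[φ − (1−φ)]) ≥ 1/5. -/

import Mathlib

open goldenRatio in
lemma fib_key (n k : ℕ) (hn : 1 ≤ n) (hk : k ≤ n) :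
    5 * Nat.fib (n - k + 1) * Nat.fib (k + 1) ≥ Nat.fib (n + 3) := by
  have h : n + 3 = (k + 1) + (n - k + 1) + 1 := by omega
  rw [h, Nat.fib_add]
  have h1 : Nat.fib (k + 1 + 1) ≤ 2 * Nat.fib (k + 1) := by
    rw [show k + 1 + 1 = k + 2 from rfl, Nat.fib_add_two]
    have := Nat.fib_le_fib_succ (n := k)
    omega
  have h2 : Nat.fib (n - k + 1 + 1) ≤ 2 * Nat.fib (n - k + 1) := by
    rw [show n - k + 1 + 1 = n - k + 2 from rfl, Nat.fib_add_two]
    have := Nat.fib_le_fib_succ (n := n - k)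
    omega
  calc Nat.fib (k + 1) * Nat.fib (n - k + 1) +
      Nat.fib (k + 1 + 1) * Nat.fib (n - k + 1 + 1)
      ≤ Nat.fib (k + 1) * Nat.fib (n - k + 1) +
        (2 * Nat.fib (k + 1)) * (2 * Nat.fib (n - k + 1)) :=
        Nat.add_le_add_left (Nat.mul_le_mul h1 h2) _
    _ = 5 * Nat.fib (n - k + 1) * Nat.fib (k + 1) := by ring

open goldenRatio in
lemma binet' (m : ℕ) : Real.goldenRatio ^ m - Real.goldenConj ^ m = Nat.fib m * Real.sqrt 5 := by
  rw [Real.coe_fib_eq]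
  have hs5 : (0:ℝ) < Real.sqrt 5 := Real.sqrt_pos.mpr (by norm_num)
  field_simp

open goldenRatio in
lemma gold_sub' : Real.goldenRatio - Real.goldenConj = Real.sqrt 5 := Real.goldenRatio_sub_goldenConj

theorem fib_ratio_lower_bound (φ : ℝ) (hφ : φ = (1 + Real.sqrt 5) / 2) :
    ∀ n : ℕ, 1 ≤ n → ∀ k : ℕ, k ≤ n →
      (5 * Nat.fib (n - k + 1) * Nat.fib (k + 1) ≥ Nat.fib (n + 3)) ∧
      ((1 : ℝ) / 5 ≤
        ((φ ^ (n - k + 1) - (1 - φ) ^ (n - k + 1)) * (φ ^ (k + 1) - (1 - φ) ^ (k + 1))) /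
          ((φ ^ (n + 3) - (1 - φ) ^ (n + 3)) * (φ - (1 - φ)))) := by
  intro n hn k hk
  have hmain := fib_key n k hn hk
  refine ⟨hmain, ?_⟩
  have hc : 1 - φ = Real.goldenConj := by rw [hφ]; unfold Real.goldenConj; ring
  have hg : φ = Real.goldenRatio := by rw [hφ]
  rw [hc, hg, binet', binet', binet', gold_sub']
  have hs5 : (0:ℝ) < Real.sqrt 5 := Real.sqrt_pos.mpr (by norm_num)
  have h5 : Real.sqrt 5 * Real.sqrt 5 = 5 := Real.mul_self_sqrt (by norm_num)
  have hfibpos : (0:ℝ) < Nat.fib (n + 3) := by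
    exact_mod_cast Nat.fib_pos.mpr (by omega)
  rw [ge_iff_le, ← Nat.cast_le (α := ℝ)] at hmain
  push_cast at hmain
  rw [div_le_div_iff₀ (by norm_num) (by positivity)]
  nlinarith [hmain, hs5, h5]
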